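/- Let V be an N×N real positive semidefinite matrix and let w ∈ [0,1]^N. Then det(diag(w)·(V − I) + I) ≥ ∏_{i=1}^N (1 − w_i); in particular det(diag(w)·(V − I) + I) ≥ 0, and it is strictly positive whenever w_i < 1 for all i. -/

import Mathlib

open Matrix BigOperators

lemma one_le_det_one_add_of_posSemidef {N : ℕ} {P : Matrix (Fin N) (Fin N) ℝ}
    (hP : P.PosSemidef) : 1 ≤ (1 + P).det := by
  have h1 : (1 + P).IsHermitian := Matrix.isHermitian_one.add hP.1
  rw [h1.det_eq_prod_eigenvalues]
  have key : ∀ i, 1 ≤ h1.eigenvalues i := by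
    intro i
    rw [h1.eigenvalues_eq i]
    set x : Fin N → ℝ := ⇑(h1.eigenvectorBasis i) with hxdef
    have hsplit : star x ⬝ᵥ ((1 + P) *ᵥ x) = star x ⬝ᵥ x + star x ⬝ᵥ (P *ᵥ x) := by
      rw [add_mulVec, one_mulVec, dotProduct_add]
    have hnorm : star x ⬝ᵥ x = 1 := by
      have := h1.eigenvectorBasis.orthonormal.1 i
      have hinner : (inner ℝ (h1.eigenvectorBasis i) (h1.eigenvectorBasis i) : ℝ) = 1 := by
        rw [real_inner_self_eq_norm_sq, this]; norm_num
      rw [EuclideanSpace.inner_eq_star_dotProduct] at hinner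
      exact hinner
    have hpos := hP.re_dotProduct_nonneg x
    simp only [RCLike.re_to_real] at hpos ⊢
    rw [hsplit, hnorm]
    linarith
  have : (1 : ℝ) = ∏ _i : Fin N, (1 : ℝ) := by simp
  rw [this]
  exact Finset.prod_le_prod (fun i _ => zero_le_one) (fun i _ => key i)

lemma dpp_det_lower_bound_lt_one {N : ℕ} (V : Matrix (Fin N) (Fin N) ℝ)
    (hV : V.PosSemidef) (w : Fin N → ℝ) (hw0 : ∀ i, 0 ≤ w i) (hw1 : ∀ i, w i < 1) :
    (∏ i : Fin N, (1 - w i)) ≤ (Matrix.diagonal w * (V - 1) + 1).det := by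
  set c : Fin N → ℝ := fun i => w i / (1 - w i) with hc
  have hne : ∀ i, (1 : ℝ) - w i ≠ 0 := fun i => by have := hw1 i; linarith
  have hcnn : ∀ i, 0 ≤ c i := fun i =>
    div_nonneg (hw0 i) (by have := hw1 i; linarith)
  have hfact : Matrix.diagonal w * (V - 1) + 1
      = Matrix.diagonal (fun i => 1 - w i) * (Matrix.diagonal c * V + 1) := by
    rw [mul_add, mul_one, ← mul_assoc, diagonal_mul_diagonal]
    have h1 : (fun i => (1 - w i) * c i) = w := by
      funext i
      rw [hc]
      field_simp
      exact mul_div_cancel_right₀ (w i) (hne i)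
    rw [h1, mul_sub, mul_one]
    have h2 : Matrix.diagonal (fun i => 1 - w i) = 1 - Matrix.diagonal w := by
      rw [← diagonal_one, diagonal_sub]
    rw [h2]
    abel
  set s : Fin N → ℝ := fun i => Real.sqrt (c i) with hs
  have hcs : Matrix.diagonal c = Matrix.diagonal s * Matrix.diagonal s := by
    rw [diagonal_mul_diagonal]
    have : c = fun i => s i * s i := funext fun i => (Real.mul_self_sqrt (hcnn i)).symm
    rw [this]
  have hdet2 : (1 : ℝ) ≤ (Matrix.diagonal c * V + 1).det := by
    rw [add_comm, hcs, mul_assoc, det_one_add_mul_comm]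
    have hP : (Matrix.diagonal s * V * Matrix.diagonal s).PosSemidef := by
      have := hV.mul_mul_conjTranspose_same (Matrix.diagonal s)
      simpa using this
    exact one_le_det_one_add_of_posSemidef hP
  have hprodpos : 0 < ∏ i : Fin N, (1 - w i) :=
    Finset.prod_pos fun i _ => by have := hw1 i; linarith
  rw [hfact, det_mul, det_diagonal]
  exact le_mul_of_one_le_right hprodpos.le hdet2

/-- For positive semidefinite `V` and `w ∈ [0,1]^N`, the continuous extension
`det(diag(w)(V - I) + I)` is bounded below by `∏_i (1 - w_i)`; in particular it is
nonnegative, and strictly positive whenever `w_i < 1` for all `i`. -/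
theorem dpp_continuous_extension_pos (N : ℕ) (V : Matrix (Fin N) (Fin N) ℝ)
    (hV : V.PosSemidef) (w : Fin N → ℝ) (hw : ∀ i, w i ∈ Set.Icc (0 : ℝ) 1) :
    (∏ i : Fin N, (1 - w i)) ≤ (Matrix.diagonal w * (V - 1) + 1).det ∧
      0 ≤ (Matrix.diagonal w * (V - 1) + 1).det ∧
      ((∀ i, w i < 1) → 0 < (Matrix.diagonal w * (V - 1) + 1).det) := by
  set f : ℝ → ℝ := fun t => (Matrix.diagonal (fun i => t * w i) * (V - 1) + 1).det with hf
  set g : ℝ → ℝ := fun t => ∏ i : Fin N, (1 - t * w i) with hg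
  have hle : ∀ t ∈ Set.Ico (0 : ℝ) 1, g t ≤ f t := by
    intro t ht
    refine dpp_det_lower_bound_lt_one V hV (fun i => t * w i)
      (fun i => mul_nonneg ht.1 (hw i).1) (fun i => ?_)
    calc t * w i ≤ t * 1 := mul_le_mul_of_nonneg_left (hw i).2 ht.1
      _ < 1 := by rw [mul_one]; exact ht.2
  have hfc : Continuous f := by
    apply Continuous.matrix_det
    apply Continuous.add
    · apply Continuous.matrix_mul _ continuous_const
      exact Continuous.matrix_diagonal (by fun_prop)
    · exact continuous_const
  have hgc : Continuous g := by fun_prop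
  have h1 : ∀ᶠ t in nhdsWithin 1 (Set.Iio (1:ℝ)), g t ≤ f t := by
    filter_upwards [Ioo_mem_nhdsLT_of_mem (by norm_num : (1:ℝ) ∈ Set.Ioc (0:ℝ) 1)]
      with t ht
    exact hle t ⟨ht.1.le, ht.2⟩
  have hfe : f 1 = (Matrix.diagonal w * (V - 1) + 1).det := by
    simp [hf]
  have hge : g 1 = ∏ i : Fin N, (1 - w i) := by simp [hg]
  have hmain : (∏ i : Fin N, (1 - w i)) ≤ (Matrix.diagonal w * (V - 1) + 1).det := by
    rw [← hfe, ← hge]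
    exact le_of_tendsto_of_tendsto
      ((hgc.tendsto 1).mono_left nhdsWithin_le_nhds)
      ((hfc.tendsto 1).mono_left nhdsWithin_le_nhds) h1
  have hprod : 0 ≤ ∏ i : Fin N, (1 - w i) :=
    Finset.prod_nonneg fun i _ => by have := (hw i).2; linarith
  refine ⟨hmain, hprod.trans hmain, fun hlt => ?_⟩
  have hprodpos : 0 < ∏ i : Fin N, (1 - w i) :=
    Finset.prod_pos fun i _ => by have := hlt i; linarith
  exact hprodpos.trans_le hmain
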